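/- Let n ≥ 1 and l ≥ 0 be integers and let w be a further indeterminate. Then, in the field ℚ(w, X_1,…,X_n), det_{1≤i,j≤n}( X_i^{j−l−n−1}(1+X_i)^{j−1}(1+wX_i)^{n−j} − X_i^{−j+l+n+1}(1+X_i^{−1})^{j−1}(1+wX_i^{−1})^{n−j} ) = ∏_{1≤i<j≤n}(X_j + X_j^{−1} − X_i − X_i^{−1}) · ∏_{i=1}^n (X_i − X_i^{−1}) · det_{1≤i,j≤n}( c_{i,j} ), where c_{i,j} = Σ_{p=0}^{j−1} Σ_{q=0}^{n−j} sgn(p−q−l−1) · w^{n−j−q} · C(j−1,p) · C(n−j,q) · h_{|p−q−l−1|−i}(X_1, X_1^{−1}, …, X_i, X_i^{−1}). -/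

import Mathlib

noncomputable section

/-- The complete homogeneous symmetric polynomial `h_d(Y_1,…,Y_N)`: the sum of all
monomials of degree `d`. -/
def hcomp {A : Type*} [CommRing A] (N d : ℕ) (Y : Fin N → A) : A :=
  ∑ k ∈ Finset.univ.filter (fun k : Fin N → Fin (d + 1) => ∑ i, (k i : ℕ) = d),
    ∏ i, Y i ^ (k i : ℕ)

/-- `h_d` for `d ∈ ℤ`, with `h_d = 0` for `d < 0`. -/
def hz {A : Type*} [CommRing A] (N : ℕ) (d : ℤ) (Y : Fin N → A) : A :=
  if 0 ≤ d then hcomp N d.toNat Y else 0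

/-- The field `ℚ(w, X_1, …, X_n)` of rational functions. -/
abbrev RF (n : ℕ) : Type := FractionRing (MvPolynomial (Fin n ⊕ Unit) ℚ)

/-- The variable `X_i`. -/
def Xv (n : ℕ) (i : Fin n) : RF n :=
  algebraMap (MvPolynomial (Fin n ⊕ Unit) ℚ) (RF n) (MvPolynomial.X (Sum.inl i))

/-- The variable `w`. -/
def wv (n : ℕ) : RF n :=
  algebraMap (MvPolynomial (Fin n ⊕ Unit) ℚ) (RF n) (MvPolynomial.X (Sum.inr ()))

/-- The `2(i+1)` arguments `X_1, X_1⁻¹, …, X_{i+1}, X_{i+1}⁻¹` (0-indexed `i < n`). -/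
def args (n i : ℕ) (hi : i < n) : Fin (2 * (i + 1)) → RF n := fun t =>
  if t.1 % 2 = 0 then Xv n ⟨t.1 / 2, by omega⟩ else (Xv n ⟨t.1 / 2, by omega⟩)⁻¹

/-- The entry `c_{i,j}` (with `i, j` 0-indexed, paper's indices being `i+1, j+1`). -/
def cent (n l : ℕ) (i j : Fin n) : RF n :=
  ∑ p ∈ Finset.range ((j : ℕ) + 1), ∑ q ∈ Finset.range (n - (j : ℕ)),
    ((Int.sign ((p : ℤ) - q - l - 1) : ℤ) : RF n) * wv n ^ (n - 1 - (j : ℕ) - q) *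
      (Nat.choose (j : ℕ) p : RF n) * (Nat.choose (n - 1 - (j : ℕ)) q : RF n) *
      hz (2 * ((i : ℕ) + 1))
        (((((p : ℤ) - q - l - 1).natAbs : ℤ) - ((i : ℕ) + 1)))
        (args n (i : ℕ) i.2)


variable {A : Type*} [CommRing A]

lemma hcomp_zero (N : ℕ) (Y : Fin N → A) : hcomp N 0 Y = 1 := by
  unfold hcomp
  rw [Finset.filter_true_of_mem, Finset.sum_eq_single (fun _ => (0 : Fin 1))]
  · simp
  · intro k _ hk; exact absurd (funext fun i => Subsingleton.elim _ _) hk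
  · simp
  · intro k _; simp [Fin.val_eq_zero]

lemma hcomp_one_var (d : ℕ) (Y : Fin 1 → A) : hcomp 1 d Y = Y 0 ^ d := by
  unfold hcomp
  rw [Finset.sum_eq_single (fun _ => (⟨d, Nat.lt_succ_self d⟩ : Fin (d+1)))]
  · simp
  · intro k hk hne
    simp only [Finset.mem_filter, Fin.sum_univ_one] at hk
    exact absurd (funext fun i => by fin_cases i; exact Fin.ext hk.2) hne
  · intro h
    simp only [Finset.mem_filter, Finset.mem_univ, true_and, Fin.sum_univ_one] at h
    simp at h

lemma hcomp_reindex (N d : ℕ) (Y : Fin N → A) (e : Fin N ≃ Fin N) :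
    hcomp N d (Y ∘ e) = hcomp N d Y := by
  unfold hcomp
  refine Finset.sum_nbij' (fun k => k ∘ e.symm) (fun k => k ∘ e) ?_ ?_ ?_ ?_ ?_
  · intro k hk
    simp only [Finset.mem_filter, Finset.mem_univ, true_and, Function.comp] at hk ⊢
    rw [Equiv.sum_comp e.symm fun i => ((k i : ℕ))]; exact hk
  · intro k hk
    simp only [Finset.mem_filter, Finset.mem_univ, true_and, Function.comp] at hk ⊢
    rw [Equiv.sum_comp e fun i => ((k i : ℕ))]; exact hk
  · intro k _; ext i; simp
  · intro k _; ext i; simp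
  · intro k _
    simp only [Function.comp]
    exact Fintype.prod_equiv e _ _ (fun i => by rw [Equiv.symm_apply_apply])

lemma hcomp_split_last (N d : ℕ) (Y : Fin (N+1) → A) :
    hcomp (N+1) d Y =
      ∑ a ∈ Finset.range (d+1), Y (Fin.last N) ^ a * hcomp N (d - a) (Y ∘ Fin.castSucc) := by
  unfold hcomp
  rw [← Finset.sum_fiberwise_of_maps_to (g := fun k : Fin (N+1) → Fin (d+1) =>
    (k (Fin.last N) : ℕ)) (t := Finset.range (d+1)) (fun k _ => Finset.mem_range.2 (k _).2)]
  refine Finset.sum_congr rfl fun a ha => ?_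
  have had : a ≤ d := Nat.lt_succ_iff.1 (Finset.mem_range.1 ha)
  rw [Finset.mul_sum]
  refine Finset.sum_nbij'
    (fun k => fun i : Fin N => (⟨min (k (Fin.castSucc i) : ℕ) (d - a), by omega⟩ : Fin (d - a + 1)))
    (fun k' => fun i : Fin (N+1) =>
      if h : i = Fin.last N then (⟨a, by omega⟩ : Fin (d+1))
      else ⟨min ((k' (i.castPred h) : ℕ)) d, by omega⟩) ?_ ?_ ?_ ?_ ?_
  all_goals intro k hk
  · simp only [Finset.mem_filter, Finset.mem_univ, true_and] at hk ⊢
    obtain ⟨hsum, hlast⟩ := hk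
    rw [Fin.sum_univ_castSucc, hlast] at hsum
    have hs2 : ∑ i : Fin N, (k (Fin.castSucc i) : ℕ) = d - a := by omega
    have hle : ∀ i : Fin N, (k (Fin.castSucc i) : ℕ) ≤ d - a := fun i =>
      le_of_le_of_eq (Finset.single_le_sum (f := fun i : Fin N => (k (Fin.castSucc i) : ℕ))
        (fun _ _ => Nat.zero_le _) (Finset.mem_univ i)) hs2
    have : ∀ i : Fin N, min (k (Fin.castSucc i) : ℕ) (d - a) = (k (Fin.castSucc i) : ℕ) :=
      fun i => by have := hle i; omega
    simp only [this]
    exact hs2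
  · simp only [Finset.mem_filter, Finset.mem_univ, true_and] at hk ⊢
    have hle : ∀ i : Fin N, (k i : ℕ) ≤ d - a := fun i =>
      le_of_le_of_eq (Finset.single_le_sum (f := fun i : Fin N => (k i : ℕ))
        (fun _ _ => Nat.zero_le _) (Finset.mem_univ i)) hk
    constructor
    · rw [Fin.sum_univ_castSucc]
      simp only [(Fin.castSucc_lt_last _).ne, dite_false, dif_pos rfl, dite_true, Fin.castPred_castSucc]
      have heq : ∑ i : Fin N, min ((k i : ℕ)) d = ∑ i : Fin N, (k i : ℕ) :=
        Finset.sum_congr rfl (fun i _ => by have := hle i; omega)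
      rw [heq, hk]; omega
    · simp
  · simp only [Finset.mem_filter, Finset.mem_univ, true_and] at hk
    obtain ⟨hsum, hlast⟩ := hk
    rw [Fin.sum_univ_castSucc, hlast] at hsum
    have hs2 : ∑ i : Fin N, (k (Fin.castSucc i) : ℕ) = d - a := by omega
    have hle : ∀ i : Fin N, (k (Fin.castSucc i) : ℕ) ≤ d - a := fun i =>
      le_of_le_of_eq (Finset.single_le_sum (f := fun i : Fin N => (k (Fin.castSucc i) : ℕ))
        (fun _ _ => Nat.zero_le _) (Finset.mem_univ i)) hs2
    funext i
    by_cases h : i = Fin.last N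
    · subst h; simp only [dif_pos rfl]; exact (Fin.ext hlast).symm
    · simp only [dif_neg h]
      apply Fin.ext
      have := hle (i.castPred h)
      simp only [Fin.castSucc_castPred] at this
      simp only [Fin.castSucc_castPred]
      show min (min (k i : ℕ) (d - a)) d = (k i : ℕ)
      omega
  · simp only [Finset.mem_filter, Finset.mem_univ, true_and] at hk
    have hle : ∀ i : Fin N, (k i : ℕ) ≤ d - a := fun i =>
      le_of_le_of_eq (Finset.single_le_sum (f := fun i : Fin N => (k i : ℕ))
        (fun _ _ => Nat.zero_le _) (Finset.mem_univ i)) hk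
    funext i
    apply Fin.ext
    simp only [dif_neg (Fin.castSucc_lt_last i).ne, Fin.castPred_castSucc]
    show min (min (k i : ℕ) d) (d - a) = (k i : ℕ)
    have := hle i; omega
  · simp only [Finset.mem_filter, Finset.mem_univ, true_and] at hk
    obtain ⟨hsum, hlast⟩ := hk
    rw [Fin.sum_univ_castSucc, hlast] at hsum
    have hs2 : ∑ i : Fin N, (k (Fin.castSucc i) : ℕ) = d - a := by omega
    have hle : ∀ i : Fin N, (k (Fin.castSucc i) : ℕ) ≤ d - a := fun i =>
      le_of_le_of_eq (Finset.single_le_sum (f := fun i : Fin N => (k (Fin.castSucc i) : ℕ))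
        (fun _ _ => Nat.zero_le _) (Finset.mem_univ i)) hs2
    rw [Fin.prod_univ_castSucc, hlast, mul_comm]
    congr 1
    refine Finset.prod_congr rfl fun i _ => ?_
    have : min (k (Fin.castSucc i) : ℕ) (d - a) = (k (Fin.castSucc i) : ℕ) := by
      have := hle i; omega
    simp only [Function.comp, this]

lemma sum_triangle {M : Type*} [AddCommMonoid M] (e : ℕ) (f : ℕ → ℕ → M) :
    ∑ b ∈ Finset.range (e+1), ∑ a ∈ Finset.range (e+1-b), f b a
      = ∑ c ∈ Finset.range (e+1), ∑ b ∈ Finset.range (c+1), f b (c-b) := by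
  rw [Finset.sum_sigma', Finset.sum_sigma']
  refine Finset.sum_nbij' (fun x => ⟨x.2 + x.1, x.1⟩) (fun x => ⟨x.2, x.1 - x.2⟩) ?_ ?_ ?_ ?_ ?_
  all_goals intro x hx
  all_goals obtain ⟨b, a⟩ := x
  all_goals simp only [Finset.mem_sigma, Finset.mem_range, Sigma.mk.inj_iff, heq_eq_eq] at hx ⊢
  · omega
  · omega
  · exact ⟨trivial, by omega⟩
  · exact ⟨by omega, trivial⟩
  · congr 1; omega

lemma hcomp_split_first (N d : ℕ) (Y : Fin (N+1) → A) :
    hcomp (N+1) d Y =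
      ∑ a ∈ Finset.range (d+1), Y 0 ^ a * hcomp N (d - a) (Y ∘ Fin.succ) := by
  have h := hcomp_reindex (N+1) d Y (finRotate (N+1))
  rw [← h, hcomp_split_last]
  refine Finset.sum_congr rfl fun a _ => ?_
  have h1 : (Y ∘ (finRotate (N+1))) (Fin.last N) = Y 0 := by
    simp [finRotate_last]
  have h2 : (Y ∘ (finRotate (N+1))) ∘ Fin.castSucc = Y ∘ Fin.succ := by
    funext i
    simp only [Function.comp, finRotate_succ_apply]
    congr 1
    apply Fin.ext
    simp [Fin.add_def]
    try omega
  rw [h1, h2]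

lemma hcomp_diff (k e : ℕ) (y : Fin (k+2) → A) :
    hcomp (k+1) (e+1) (y ∘ Fin.succ) - hcomp (k+1) (e+1) (y ∘ Fin.castSucc)
      = (y (Fin.last (k+1)) - y 0) * hcomp (k+2) e y := by
  set mid : Fin k → A := fun i => y (Fin.castSucc (Fin.succ i)) with hmid
  have hm1 : (y ∘ Fin.succ) ∘ Fin.castSucc = mid := by
    funext i; simp only [Function.comp, hmid]; exact congrArg y (Fin.ext rfl)
  have hm2 : (y ∘ Fin.castSucc) ∘ Fin.succ = mid := by
    funext i; simp only [Function.comp, hmid]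
  have hL : (y ∘ Fin.succ) (Fin.last k) = y (Fin.last (k+1)) := by
    simp [Function.comp, Fin.succ_last]
  have h0 : (y ∘ Fin.castSucc) 0 = y 0 := by simp [Function.comp]
  rw [hcomp_split_last k (e+1) (y ∘ Fin.succ), hcomp_split_first k (e+1) (y ∘ Fin.castSucc),
    hm1, hm2, hL, h0, ← Finset.sum_sub_distrib]
  have hr : hcomp (k+2) e y
      = ∑ b ∈ Finset.range (e+1), ∑ a ∈ Finset.range (e+1-b),
          y (Fin.last (k+1)) ^ b * (y 0 ^ a * hcomp k (e - b - a) mid) := by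
    rw [hcomp_split_last (k+1) e y]
    refine Finset.sum_congr rfl fun b hb => ?_
    rw [hcomp_split_first k (e-b) (y ∘ Fin.castSucc), Finset.mul_sum, hm2]
    simp only [h0]
    have : e - b + 1 = e + 1 - b := by
      simp only [Finset.mem_range] at hb; omega
    rw [this]
  rw [hr, Finset.mul_sum]
  simp only [← sub_mul]
  rw [Finset.sum_range_succ' (fun c => (y (Fin.last (k+1)) ^ c - y 0 ^ c) * hcomp k (e + 1 - c) mid) (e+1)]
  simp only [pow_zero, sub_self, zero_mul, add_zero]
  rw [show (∑ b ∈ Finset.range (e+1), (y (Fin.last (k+1)) - y 0) *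
      ∑ a ∈ Finset.range (e+1-b), y (Fin.last (k+1)) ^ b * (y 0 ^ a * hcomp k (e - b - a) mid))
    = ∑ b ∈ Finset.range (e+1), ∑ a ∈ Finset.range (e+1-b),
        (y (Fin.last (k+1)) - y 0) * (y (Fin.last (k+1)) ^ b * (y 0 ^ a * hcomp k (e - b - a) mid))
    from Finset.sum_congr rfl fun b _ => Finset.mul_sum _ _ _]
  rw [sum_triangle e (fun b a => (y (Fin.last (k+1)) - y 0) *
    (y (Fin.last (k+1)) ^ b * (y 0 ^ a * hcomp k (e - b - a) mid)))]
  refine Finset.sum_congr rfl fun c hc => ?_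
  simp only [Finset.mem_range] at hc
  have h1 : ∀ b ∈ Finset.range (c+1), (y (Fin.last (k+1)) - y 0) *
      (y (Fin.last (k+1)) ^ b * (y 0 ^ (c-b) * hcomp k (e - b - (c-b)) mid))
      = (y (Fin.last (k+1)) ^ b * y 0 ^ (c - b)) * hcomp k (e - c) mid *
        (y (Fin.last (k+1)) - y 0) := by
    intro b hb
    simp only [Finset.mem_range] at hb
    have : e - b - (c - b) = e - c := by omega
    rw [this]; ring
  have hg : (∑ b ∈ Finset.range (c+1), y (Fin.last (k+1)) ^ b * y 0 ^ (c - b))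
      = ∑ b ∈ Finset.range (c+1), y (Fin.last (k+1)) ^ b * y 0 ^ (c + 1 - 1 - b) := by
    refine Finset.sum_congr rfl fun b hb => ?_
    congr 2
    try omega
  have hgeo : y (Fin.last (k+1)) ^ (c+1) - y 0 ^ (c+1)
      = (∑ b ∈ Finset.range (c+1), y (Fin.last (k+1)) ^ b * y 0 ^ (c - b)) *
        (y (Fin.last (k+1)) - y 0) := by
    rw [hg, geom_sum₂_mul]
  rw [show e + 1 - (c+1) = e - c from by omega, hgeo,
    Finset.sum_congr rfl h1, ← Finset.sum_mul, ← Finset.sum_mul]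
  ring

lemma hz_diff (k : ℕ) (d : ℤ) (y : Fin (k+2) → A) :
    hz (k+1) d (y ∘ Fin.succ) - hz (k+1) d (y ∘ Fin.castSucc)
      = (y (Fin.last (k+1)) - y 0) * hz (k+2) (d-1) y := by
  unfold hz
  rcases lt_trichotomy d 0 with h|h|h
  · rw [if_neg (by omega), if_neg (by omega), if_neg (by omega)]; ring
  · subst h
    rw [if_pos le_rfl, if_pos le_rfl, if_neg (by omega)]
    rw [Int.toNat_zero, hcomp_zero, hcomp_zero]; ring
  · rw [if_pos (by omega), if_pos (by omega), if_pos (by omega)]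
    obtain ⟨e, he⟩ : ∃ e : ℕ, d = (e : ℤ) + 1 := ⟨(d-1).toNat, by omega⟩
    rw [show d.toNat = e + 1 from by omega, show (d-1).toNat = e from by omega]
    exact hcomp_diff k e y

lemma erase_zero_eq_map_succ (k : ℕ) (i : Fin (k+1)) :
    ((Finset.univ.erase (Fin.succ i)).erase (0 : Fin (k+2)))
      = Finset.map ⟨Fin.succ, Fin.succ_injective _⟩ (Finset.univ.erase i) := by
  ext s
  simp only [Finset.mem_erase, Finset.mem_univ, and_true, Finset.mem_map,
    Function.Embedding.coeFn_mk]
  constructor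
  · rintro ⟨hs0, hsi⟩
    refine ⟨s.pred hs0, fun h => hsi ?_, Fin.succ_pred _ _⟩
    rw [← Fin.succ_pred s hs0, h]
  · rintro ⟨t, ht, rfl⟩
    exact ⟨Fin.succ_ne_zero t, fun h => ht (Fin.succ_injective _ h)⟩

lemma erase_last_eq_map_castSucc (k : ℕ) (i : Fin (k+1)) :
    ((Finset.univ.erase (Fin.castSucc i)).erase (Fin.last (k+1)))
      = Finset.map ⟨Fin.castSucc, Fin.castSucc_injective _⟩ (Finset.univ.erase i) := by
  ext s
  simp only [Finset.mem_erase, Finset.mem_univ, and_true, Finset.mem_map,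
    Function.Embedding.coeFn_mk]
  constructor
  · rintro ⟨hsl, hsi⟩
    refine ⟨s.castPred hsl, fun h => hsi ?_, Fin.castSucc_castPred _ _⟩
    rw [← Fin.castSucc_castPred s hsl, h]
  · rintro ⟨t, ht, rfl⟩
    exact ⟨(Fin.castSucc_lt_last t).ne, fun h => ht (Fin.castSucc_injective _ h)⟩

lemma dd {F : Type*} [Field F] (k : ℕ) (y : Fin (k+1) → F)
    (hy : ∀ a b : Fin (k+1), a ≠ b → y a ≠ y b) (e : ℕ) :
    ∑ r : Fin (k+1), y r ^ e / ∏ s ∈ Finset.univ.erase r, (y r - y s)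
      = hz (k+1) ((e : ℤ) - k) y := by
  induction k generalizing e with
  | zero =>
    simp only [Nat.cast_zero, sub_zero]
    unfold hz
    rw [if_pos (Int.natCast_nonneg e), Int.toNat_natCast, hcomp_one_var]
    rw [Fin.sum_univ_one]
    have : (Finset.univ.erase (0 : Fin 1)) = ∅ := by
      ext s; simp [Fin.fin_one_eq_zero s]
    rw [this, Finset.prod_empty, div_one]
  | succ k ih =>
    have hne : y (Fin.last (k+1)) - y 0 ≠ 0 :=
      sub_ne_zero.2 (hy _ _ (Fin.ext_iff.not.2 (by simp)))
    apply mul_left_cancel₀ hne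
    have key1 : ∑ r : Fin (k+2), y r ^ e * (y r - y 0) /
        ∏ s ∈ Finset.univ.erase r, (y r - y s)
        = hz (k+1) ((e:ℤ) - k) (y ∘ Fin.succ) := by
      rw [← ih (y ∘ Fin.succ) (fun a b h => hy _ _ (fun hh => h (Fin.succ_injective _ hh)))]
      rw [Fin.sum_univ_succ]
      simp only [sub_self, mul_zero, zero_mul, zero_div, zero_add]
      refine Finset.sum_congr rfl fun i _ => ?_
      have h0mem : (0 : Fin (k+2)) ∈ Finset.univ.erase (Fin.succ i) :=
        Finset.mem_erase.2 ⟨(Fin.succ_ne_zero i).symm, Finset.mem_univ _⟩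
      rw [← Finset.mul_prod_erase _ _ h0mem, erase_zero_eq_map_succ, Finset.prod_map]
      simp only [Function.Embedding.coeFn_mk, Function.comp]
      rw [mul_comm (y (Fin.succ i) ^ e) (y (Fin.succ i) - y 0), mul_div_mul_left]
      exact sub_ne_zero.2 (hy _ _ (Fin.succ_ne_zero i))
    have key2 : ∑ r : Fin (k+2), y r ^ e * (y r - y (Fin.last (k+1))) /
        ∏ s ∈ Finset.univ.erase r, (y r - y s)
        = hz (k+1) ((e:ℤ) - k) (y ∘ Fin.castSucc) := by
      rw [← ih (y ∘ Fin.castSucc)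
        (fun a b h => hy _ _ (fun hh => h (Fin.castSucc_injective _ hh)))]
      rw [Fin.sum_univ_castSucc]
      simp only [sub_self, mul_zero, zero_mul, zero_div, add_zero]
      refine Finset.sum_congr rfl fun i _ => ?_
      have hlmem : Fin.last (k+1) ∈ Finset.univ.erase (Fin.castSucc i) :=
        Finset.mem_erase.2 ⟨((Fin.castSucc_lt_last i).ne).symm, Finset.mem_univ _⟩
      rw [← Finset.mul_prod_erase _ _ hlmem, erase_last_eq_map_castSucc, Finset.prod_map]
      simp only [Function.Embedding.coeFn_mk, Function.comp]
      rw [mul_comm (y (Fin.castSucc i) ^ e) (y (Fin.castSucc i) - y (Fin.last (k+1))),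
        mul_div_mul_left]
      exact sub_ne_zero.2 (hy _ _ (Fin.castSucc_lt_last i).ne)
    calc (y (Fin.last (k+1)) - y 0) *
        ∑ r : Fin (k+2), y r ^ e / ∏ s ∈ Finset.univ.erase r, (y r - y s)
        = ∑ r : Fin (k+2), (y r ^ e * (y r - y 0) /
            ∏ s ∈ Finset.univ.erase r, (y r - y s)
          - y r ^ e * (y r - y (Fin.last (k+1))) /
            ∏ s ∈ Finset.univ.erase r, (y r - y s)) := by
          rw [Finset.mul_sum]
          refine Finset.sum_congr rfl fun r _ => ?_
          rw [div_sub_div_same]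
          ring
      _ = hz (k+1) ((e:ℤ) - k) (y ∘ Fin.succ) - hz (k+1) ((e:ℤ) - k) (y ∘ Fin.castSucc) := by
          rw [Finset.sum_sub_distrib, key1, key2]
      _ = (y (Fin.last (k+1)) - y 0) * hz (k+2) ((e:ℤ) - (k+1)) y := by
          rw [hz_diff]
          congr 1
          push_cast
          try ring_nf

lemma rfinj (n : ℕ) : Function.Injective
    (algebraMap (MvPolynomial (Fin n ⊕ Unit) ℚ) (RF n)) :=
  IsFractionRing.injective _ _

lemma Xv_ne_zero (n : ℕ) (i : Fin n) : Xv n i ≠ 0 := by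
  unfold Xv
  rw [← map_zero (algebraMap (MvPolynomial (Fin n ⊕ Unit) ℚ) (RF n))]
  exact fun h => MvPolynomial.X_ne_zero _ (rfinj n h)

lemma Xv_ne_Xv (n : ℕ) {i j : Fin n} (h : i ≠ j) : Xv n i ≠ Xv n j := by
  unfold Xv
  intro hh
  exact h (Sum.inl_injective (MvPolynomial.X_injective (rfinj n hh)))

lemma Xv_mul_ne_one (n : ℕ) (i j : Fin n) : Xv n i * Xv n j ≠ 1 := by
  unfold Xv
  rw [← map_mul, ← map_one (algebraMap (MvPolynomial (Fin n ⊕ Unit) ℚ) (RF n))]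
  intro hh
  have h2 := rfinj n hh
  have h3 := congrArg (MvPolynomial.eval (fun _ => (0:ℚ))) h2
  simp [MvPolynomial.eval_X] at h3

lemma Xv_ne_inv (n : ℕ) (i j : Fin n) : Xv n i ≠ (Xv n j)⁻¹ := by
  intro h
  apply Xv_mul_ne_one n i j
  rw [h, inv_mul_cancel₀ (Xv_ne_zero n j)]

lemma Xv_sub_inv_ne_zero (n : ℕ) (i : Fin n) : Xv n i - (Xv n i)⁻¹ ≠ 0 :=
  sub_ne_zero.2 (Xv_ne_inv n i i)

lemma Yv_sub_ne_zero (n : ℕ) {i j : Fin n} (h : i ≠ j) :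
    Xv n i + (Xv n i)⁻¹ - (Xv n j + (Xv n j)⁻¹) ≠ 0 := by
  intro hh
  have key : (Xv n i - Xv n j) * (Xv n i * Xv n j - 1)
      = Xv n i * Xv n j * (Xv n i + (Xv n i)⁻¹ - (Xv n j + (Xv n j)⁻¹)) := by
    have h1 := mul_inv_cancel₀ (Xv_ne_zero n i)
    have h2 := mul_inv_cancel₀ (Xv_ne_zero n j)
    linear_combination (-(Xv n j)) * h1 + (Xv n i) * h2
  rw [hh, mul_zero] at key
  rcases mul_eq_zero.1 key with h1 | h1
  · exact Xv_ne_Xv n h (sub_eq_zero.1 h1)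
  · exact Xv_mul_ne_one n i j (sub_eq_zero.1 h1)

lemma args_ne (n i : ℕ) (hi : i < n) :
    ∀ a b : Fin (2 * (i + 1)), a ≠ b → args n i hi a ≠ args n i hi b := by
  intro a b hab
  unfold args
  have hv : (a : ℕ) ≠ (b : ℕ) := fun h => hab (Fin.ext h)
  by_cases ha : (a : ℕ) % 2 = 0 <;> by_cases hb : (b : ℕ) % 2 = 0
  · rw [if_pos ha, if_pos hb]
    exact Xv_ne_Xv n (Fin.ne_of_val_ne (show (a:ℕ)/2 ≠ (b:ℕ)/2 by omega))
  · rw [if_pos ha, if_neg hb]; exact Xv_ne_inv n _ _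
  · rw [if_neg ha, if_pos hb]; exact (Xv_ne_inv n _ _).symm
  · rw [if_neg ha, if_neg hb]
    intro h
    have h2 : Xv n ⟨(a:ℕ)/2, by omega⟩ = Xv n ⟨(b:ℕ)/2, by omega⟩ := inv_injective h
    exact Xv_ne_Xv n (Fin.ne_of_val_ne (show (a:ℕ)/2 ≠ (b:ℕ)/2 by omega)) h2

lemma expand_entry {F : Type*} [Field F] (X W : F) (hX : X ≠ 0) (J M : ℕ) (E : ℤ) :
    X ^ E * (1 + X) ^ J * (1 + W * X) ^ M
      = ∑ p ∈ Finset.range (J+1), ∑ q ∈ Finset.range (M+1),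
          W ^ (M - q) * (J.choose p : F) * (M.choose q : F) * X ^ (E + p + ((M - q : ℕ) : ℤ)) := by
  have h1 : (1 + X) ^ J = ∑ p ∈ Finset.range (J+1), X ^ p * (J.choose p : F) := by
    rw [add_comm, add_pow]; simp
  have h2 : (1 + W * X) ^ M
      = ∑ q ∈ Finset.range (M+1), W ^ (M-q) * X ^ (M-q) * (M.choose q : F) := by
    rw [add_comm, add_pow]
    conv_lhs => rw [← Finset.sum_range_reflect]
    refine Finset.sum_congr rfl fun q hq => ?_
    simp only [Finset.mem_range] at hq
    rw [show M + 1 - 1 - q = M - q from by omega, one_pow, mul_one, mul_pow,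
      Nat.choose_symm (show q ≤ M from by omega)]
  rw [h1, h2, mul_assoc, Finset.sum_mul_sum, Finset.mul_sum]
  refine Finset.sum_congr rfl fun p hp => ?_
  rw [Finset.mul_sum]
  refine Finset.sum_congr rfl fun q hq => ?_
  rw [zpow_add₀ hX, zpow_add₀ hX, zpow_natCast, zpow_natCast]
  ring

lemma entryA (n l : ℕ) (i j : Fin n) :
    Xv n i ^ ((((j : ℕ) : ℤ) + 1) - l - n - 1) * (1 + Xv n i) ^ (j : ℕ) *
        (1 + wv n * Xv n i) ^ (n - 1 - (j : ℕ)) -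
      Xv n i ^ (-(((j : ℕ) : ℤ) + 1) + l + n + 1) * (1 + (Xv n i)⁻¹) ^ (j : ℕ) *
        (1 + wv n * (Xv n i)⁻¹) ^ (n - 1 - (j : ℕ))
    = ∑ p ∈ Finset.range ((j:ℕ)+1), ∑ q ∈ Finset.range (n - (j:ℕ)),
        wv n ^ (n - 1 - (j:ℕ) - q) * ((j:ℕ).choose p : RF n) *
        ((n - 1 - (j:ℕ)).choose q : RF n) *
        (Xv n i ^ (((p:ℤ) - q - l - 1)) - Xv n i ^ (-((p:ℤ) - q - l - 1))) := by
  have hX := Xv_ne_zero n i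
  have hXi : (Xv n i)⁻¹ ≠ 0 := inv_ne_zero hX
  have hjn : (j : ℕ) < n := j.2
  have hrange : n - (j:ℕ) = (n - 1 - (j:ℕ)) + 1 := by omega
  have e1 := expand_entry (Xv n i) (wv n) hX (j:ℕ) (n-1-(j:ℕ)) ((((j:ℕ):ℤ)+1) - l - n - 1)
  have e2 := expand_entry (Xv n i)⁻¹ (wv n) hXi (j:ℕ) (n-1-(j:ℕ)) ((((j:ℕ):ℤ)+1) - l - n - 1)
  have hswap : Xv n i ^ (-(((j:ℕ):ℤ) + 1) + l + n + 1)
      = (Xv n i)⁻¹ ^ ((((j:ℕ):ℤ)+1) - l - n - 1) := by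
    rw [inv_zpow, ← zpow_neg]; congr 1; ring
  rw [hswap, e1, e2, hrange, ← Finset.sum_sub_distrib]
  refine Finset.sum_congr rfl fun p hp => ?_
  rw [← Finset.sum_sub_distrib]
  refine Finset.sum_congr rfl fun q hq => ?_
  simp only [Finset.mem_range] at hp hq
  have hexp : (((j:ℕ):ℤ)+1) - l - n - 1 + p + ((n - 1 - (j:ℕ) - q : ℕ) : ℤ)
      = (p:ℤ) - q - l - 1 := by
    have hj := hjn
    have hq2 : q ≤ n - 1 - (j:ℕ) := by omega
    push_cast [Nat.cast_sub hq2]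
    omega
  rw [hexp, inv_zpow, ← zpow_neg]
  ring

lemma dd' {F : Type*} [Field F] (N : ℕ) (hN : 0 < N) (y : Fin N → F)
    (hy : ∀ a b : Fin N, a ≠ b → y a ≠ y b) (e : ℕ) :
    ∑ r : Fin N, y r ^ e / ∏ s ∈ Finset.univ.erase r, (y r - y s)
      = hz N ((e : ℤ) - ((N - 1 : ℕ) : ℤ)) y := by
  obtain ⟨k, rfl⟩ : ∃ k, N = k + 1 := ⟨N - 1, by omega⟩
  rw [show (k + 1 - 1 : ℕ) = k from by omega]
  exact dd k y hy e

def pairSet (m : ℕ) (s : Finset (Fin m)) : Finset (Fin (2*m)) :=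
  s.biUnion (fun v => {(⟨2*(v:ℕ), by omega⟩ : Fin (2*m)), ⟨2*(v:ℕ)+1, by omega⟩})

lemma pairSet_disj (m : ℕ) (s : Finset (Fin m)) :
    Set.PairwiseDisjoint ↑s
      (fun v : Fin m => ({(⟨2*(v:ℕ), by omega⟩ : Fin (2*m)), ⟨2*(v:ℕ)+1, by omega⟩} : Finset (Fin (2*m)))) := by
  intro a _ b _ hab
  simp only [Finset.disjoint_left, Finset.mem_insert, Finset.mem_singleton]
  rintro t (rfl|rfl) h2 <;>
    rcases h2 with h2|h2 <;>
    · rw [Fin.ext_iff] at h2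
      simp only at h2
      exact hab (Fin.ext (by omega))

lemma prod_pairSet {M : Type*} [CommMonoid M] (m : ℕ) (s : Finset (Fin m))
    (f : Fin (2*m) → M) :
    ∏ t ∈ pairSet m s, f t
      = ∏ v ∈ s, (f ⟨2*(v:ℕ), by omega⟩ * f ⟨2*(v:ℕ)+1, by omega⟩) := by
  rw [pairSet, Finset.prod_biUnion (pairSet_disj m s)]
  refine Finset.prod_congr rfl fun v _ => ?_
  rw [Finset.prod_pair (Fin.ne_of_val_ne (by simp))]

lemma sum_pairSet {M : Type*} [AddCommMonoid M] (m : ℕ) (s : Finset (Fin m))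
    (f : Fin (2*m) → M) :
    ∑ t ∈ pairSet m s, f t
      = ∑ v ∈ s, (f ⟨2*(v:ℕ), by omega⟩ + f ⟨2*(v:ℕ)+1, by omega⟩) := by
  rw [pairSet, Finset.sum_biUnion (pairSet_disj m s)]
  refine Finset.sum_congr rfl fun v _ => ?_
  rw [Finset.sum_pair (Fin.ne_of_val_ne (by simp))]

lemma pairSet_univ (m : ℕ) : pairSet m Finset.univ = Finset.univ := by
  ext t
  have ht := t.2
  simp only [pairSet, Finset.mem_biUnion, Finset.mem_univ, true_and, iff_true,
    Finset.mem_insert, Finset.mem_singleton, Fin.ext_iff]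
  refine ⟨⟨(t:ℕ)/2, by omega⟩, ?_⟩
  show (t:ℕ) = 2 * ((t:ℕ)/2) ∨ (t:ℕ) = 2 * ((t:ℕ)/2) + 1
  omega

lemma pairSet_erase (m : ℕ) (u : Fin m) :
    pairSet m (Finset.univ.erase u)
      = (Finset.univ.erase (⟨2*(u:ℕ), by omega⟩ : Fin (2*m))).erase ⟨2*(u:ℕ)+1, by omega⟩ := by
  ext t
  have ht := t.2
  simp only [pairSet, Finset.mem_biUnion, Finset.mem_erase, Finset.mem_univ, true_and,
    and_true, Finset.mem_insert, Finset.mem_singleton, ne_eq, Fin.ext_iff]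
  constructor
  · rintro ⟨v, hv, h|h⟩ <;> omega
  · rintro ⟨h1, h2⟩
    refine ⟨⟨(t:ℕ)/2, by omega⟩, ?_, ?_⟩
    · show ¬ ((t:ℕ)/2 = (u:ℕ))
      omega
    · show (t:ℕ) = 2 * ((t:ℕ)/2) ∨ (t:ℕ) = 2 * ((t:ℕ)/2) + 1
      omega

lemma pair_div_add {F : Type*} [Field F] (a Pi : F) (ha : a ≠ 0) (hs : a - a⁻¹ ≠ 0)
    (hPi : Pi ≠ 0) (m i' : ℕ) :
    a^(m+i') / ((a - a⁻¹) * (a^i' * Pi)) + (a⁻¹)^(m+i') / ((a⁻¹ - a) * ((a⁻¹)^i' * Pi))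
      = (a^((m:ℕ):ℤ) - a^(-((m:ℕ):ℤ))) / ((a - a⁻¹) * Pi) := by
  rw [zpow_neg, zpow_natCast, inv_pow, inv_pow]
  have hpow : a ^ i' ≠ 0 := pow_ne_zero _ ha
  have h1 : a ^ (m + i') / ((a - a⁻¹) * (a ^ i' * Pi)) = a ^ m / ((a - a⁻¹) * Pi) := by
    rw [pow_add, show (a - a⁻¹) * (a ^ i' * Pi) = a ^ i' * ((a - a⁻¹) * Pi) from by ring,
      show a ^ m * a ^ i' = a ^ i' * a ^ m from by ring, mul_div_mul_left _ _ hpow]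
  have h2 : (a ^ (m + i'))⁻¹ / ((a⁻¹ - a) * ((a ^ i')⁻¹ * Pi))
      = -((a ^ m)⁻¹ / ((a - a⁻¹) * Pi)) := by
    rw [pow_add, mul_inv,
      show (a⁻¹ - a) * ((a ^ i')⁻¹ * Pi) = (a ^ i')⁻¹ * (-((a - a⁻¹) * Pi)) from by ring,
      show (a ^ m)⁻¹ * (a ^ i')⁻¹ = (a ^ i')⁻¹ * (a ^ m)⁻¹ from by ring,
      mul_div_mul_left _ _ (inv_ne_zero hpow), div_neg]
  rw [h1, h2, sub_div]
  ring

lemma sign_mul_zpow {F : Type*} [Field F] (a : F) (ha : a ≠ 0) (m : ℤ) :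
    ((m.sign : ℤ) : F) * (a ^ ((m.natAbs : ℕ) : ℤ) - a ^ (-((m.natAbs : ℕ) : ℤ)))
      = a ^ m - a ^ (-m) := by
  rcases lt_trichotomy m 0 with h|h|h
  · rw [Int.sign_eq_neg_one_of_neg h, show ((m.natAbs : ℕ) : ℤ) = -m from by omega]
    push_cast
    ring
  · subst h; simp
  · rw [Int.sign_eq_one_of_pos h, show ((m.natAbs : ℕ) : ℤ) = m from by omega]
    push_cast
    ring

lemma sum_fin_cast {M : Type*} [AddCommMonoid M] (n i : ℕ) (hi : i < n) (f : Fin n → M) :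
    ∑ v : Fin (i+1), f ⟨(v:ℕ), by omega⟩
      = ∑ r ∈ Finset.univ.filter (fun r : Fin n => (r:ℕ) ≤ i), f r := by
  refine Finset.sum_nbij' (fun v => (⟨(v:ℕ), by omega⟩ : Fin n))
    (fun r => (⟨min (r:ℕ) i, by omega⟩ : Fin (i+1))) ?_ ?_ ?_ ?_ ?_ <;> intro a hha
  · simp only [Finset.mem_filter, Finset.mem_univ, true_and]
    exact Nat.lt_succ_iff.1 a.2
  · simp
  · apply Fin.ext
    have := Nat.lt_succ_iff.1 a.2
    simp only [Fin.val_mk]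
    omega
  · simp only [Finset.mem_filter, Finset.mem_univ, true_and] at hha
    apply Fin.ext
    simp only [Fin.val_mk]
    omega
  · rfl

lemma prod_fin_cast_erase {M : Type*} [CommMonoid M] (n i : ℕ) (hi : i < n)
    (u : Fin (i+1)) (g : Fin n → M) :
    ∏ v ∈ Finset.univ.erase u, g ⟨(v:ℕ), by omega⟩
      = ∏ r ∈ (Finset.univ.filter (fun r : Fin n => (r:ℕ) ≤ i)).erase ⟨(u:ℕ), by omega⟩,
          g r := by
  refine Finset.prod_nbij' (fun v => (⟨(v:ℕ), by omega⟩ : Fin n))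
    (fun r => (⟨min (r:ℕ) i, by omega⟩ : Fin (i+1))) ?_ ?_ ?_ ?_ ?_ <;> intro a hha
  · simp only [Finset.mem_erase, Finset.mem_filter, Finset.mem_univ, true_and,
      and_true] at hha ⊢
    refine ⟨fun h => hha (Fin.ext ?_), Nat.lt_succ_iff.1 a.2⟩
    rw [Fin.ext_iff] at h
    simpa using h
  · simp only [Finset.mem_erase, Finset.mem_filter, Finset.mem_univ, true_and,
      and_true] at hha ⊢
    obtain ⟨h1, h2⟩ := hha
    intro h
    apply h1
    rw [Fin.ext_iff] at h ⊢
    simp only [Fin.val_mk] at h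
    have hu := Nat.lt_succ_iff.1 u.2
    simp only [Fin.val_mk]
    omega
  · apply Fin.ext
    have := Nat.lt_succ_iff.1 a.2
    simp only [Fin.val_mk]
    omega
  · simp only [Finset.mem_erase, Finset.mem_filter, Finset.mem_univ, true_and] at hha
    apply Fin.ext
    simp only [Fin.val_mk]
    omega
  · rfl

def Yv (n : ℕ) (r : Fin n) : RF n := Xv n r + (Xv n r)⁻¹

lemma args_even (n i : ℕ) (hi : i < n) (v : Fin (i+1)) :
    args n i hi ⟨2*(v:ℕ), by omega⟩ = Xv n ⟨(v:ℕ), by omega⟩ := by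
  unfold args
  rw [if_pos (show (2*(v:ℕ)) % 2 = 0 by omega)]
  congr 1
  exact Fin.ext (show 2*(v:ℕ)/2 = (v:ℕ) by omega)

lemma args_odd (n i : ℕ) (hi : i < n) (v : Fin (i+1)) :
    args n i hi ⟨2*(v:ℕ)+1, by omega⟩ = (Xv n ⟨(v:ℕ), by omega⟩)⁻¹ := by
  unfold args
  rw [if_neg (show ¬((2*(v:ℕ)+1) % 2 = 0) by omega)]
  congr 2
  exact Fin.ext (show (2*(v:ℕ)+1)/2 = (v:ℕ) by omega)

lemma XY_left (n : ℕ) (a b : Fin n) :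
    (Xv n a - Xv n b) * (Xv n a - (Xv n b)⁻¹) = Xv n a * (Yv n a - Yv n b) := by
  have h1 := mul_inv_cancel₀ (Xv_ne_zero n a)
  have h2 := mul_inv_cancel₀ (Xv_ne_zero n b)
  unfold Yv
  linear_combination h2 - h1

lemma XY_inv (n : ℕ) (a b : Fin n) :
    ((Xv n a)⁻¹ - Xv n b) * ((Xv n a)⁻¹ - (Xv n b)⁻¹) = (Xv n a)⁻¹ * (Yv n a - Yv n b) := by
  have h1 := mul_inv_cancel₀ (Xv_ne_zero n a)
  have h2 := mul_inv_cancel₀ (Xv_ne_zero n b)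
  unfold Yv
  linear_combination h2 - h1

lemma card_erase_fin (i : ℕ) (v : Fin (i+1)) :
    ((Finset.univ : Finset (Fin (i+1))).erase v).card = i := by
  rw [Finset.card_erase_of_mem (Finset.mem_univ v), Finset.card_univ, Fintype.card_fin]
  omega

lemma den_even (n i : ℕ) (hi : i < n) (v : Fin (i+1)) :
    ∏ s ∈ Finset.univ.erase (⟨2*(v:ℕ), by omega⟩ : Fin (2*(i+1))),
        (Xv n ⟨(v:ℕ), by omega⟩ - args n i hi s)
      = (Xv n ⟨(v:ℕ), by omega⟩ - (Xv n ⟨(v:ℕ), by omega⟩)⁻¹) *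
        ((Xv n ⟨(v:ℕ), by omega⟩) ^ i *
          ∏ u ∈ Finset.univ.erase v, (Yv n ⟨(v:ℕ), by omega⟩ - Yv n ⟨(u:ℕ), by omega⟩)) := by
  have hmem : (⟨2*(v:ℕ)+1, by omega⟩ : Fin (2*(i+1)))
      ∈ Finset.univ.erase (⟨2*(v:ℕ), by omega⟩ : Fin (2*(i+1))) :=
    Finset.mem_erase.2 ⟨Fin.ne_of_val_ne (by simp), Finset.mem_univ _⟩
  rw [← Finset.mul_prod_erase _ _ hmem, args_odd, ← pairSet_erase, prod_pairSet]
  congr 1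
  calc ∏ u ∈ Finset.univ.erase v,
        ((Xv n ⟨(v:ℕ), by omega⟩ - args n i hi ⟨2*(u:ℕ), by omega⟩) *
          (Xv n ⟨(v:ℕ), by omega⟩ - args n i hi ⟨2*(u:ℕ)+1, by omega⟩))
      = ∏ u ∈ Finset.univ.erase v,
          (Xv n ⟨(v:ℕ), by omega⟩ * (Yv n ⟨(v:ℕ), by omega⟩ - Yv n ⟨(u:ℕ), by omega⟩)) := by
        refine Finset.prod_congr rfl fun u _ => ?_
        rw [args_even, args_odd, XY_left]
    _ = (Xv n ⟨(v:ℕ), by omega⟩) ^ i *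
          ∏ u ∈ Finset.univ.erase v, (Yv n ⟨(v:ℕ), by omega⟩ - Yv n ⟨(u:ℕ), by omega⟩) := by
        rw [Finset.prod_mul_distrib, Finset.prod_const, card_erase_fin]

lemma den_odd (n i : ℕ) (hi : i < n) (v : Fin (i+1)) :
    ∏ s ∈ Finset.univ.erase (⟨2*(v:ℕ)+1, by omega⟩ : Fin (2*(i+1))),
        ((Xv n ⟨(v:ℕ), by omega⟩)⁻¹ - args n i hi s)
      = ((Xv n ⟨(v:ℕ), by omega⟩)⁻¹ - Xv n ⟨(v:ℕ), by omega⟩) *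
        (((Xv n ⟨(v:ℕ), by omega⟩)⁻¹) ^ i *
          ∏ u ∈ Finset.univ.erase v, (Yv n ⟨(v:ℕ), by omega⟩ - Yv n ⟨(u:ℕ), by omega⟩)) := by
  have hmem : (⟨2*(v:ℕ), by omega⟩ : Fin (2*(i+1)))
      ∈ Finset.univ.erase (⟨2*(v:ℕ)+1, by omega⟩ : Fin (2*(i+1))) :=
    Finset.mem_erase.2 ⟨Fin.ne_of_val_ne (by simp), Finset.mem_univ _⟩
  rw [← Finset.mul_prod_erase _ _ hmem, args_even, Finset.erase_right_comm,
    ← pairSet_erase, prod_pairSet]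
  congr 1
  calc ∏ u ∈ Finset.univ.erase v,
        (((Xv n ⟨(v:ℕ), by omega⟩)⁻¹ - args n i hi ⟨2*(u:ℕ), by omega⟩) *
          ((Xv n ⟨(v:ℕ), by omega⟩)⁻¹ - args n i hi ⟨2*(u:ℕ)+1, by omega⟩))
      = ∏ u ∈ Finset.univ.erase v,
          ((Xv n ⟨(v:ℕ), by omega⟩)⁻¹ * (Yv n ⟨(v:ℕ), by omega⟩ - Yv n ⟨(u:ℕ), by omega⟩)) := by
        refine Finset.prod_congr rfl fun u _ => ?_
        rw [args_even, args_odd, XY_inv]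
    _ = ((Xv n ⟨(v:ℕ), by omega⟩)⁻¹) ^ i *
          ∏ u ∈ Finset.univ.erase v, (Yv n ⟨(v:ℕ), by omega⟩ - Yv n ⟨(u:ℕ), by omega⟩) := by
        rw [Finset.prod_mul_distrib, Finset.prod_const, card_erase_fin]

lemma PP_ne_zero (n i : ℕ) (hi : i < n) (v : Fin (i+1)) :
    (∏ u ∈ Finset.univ.erase v,
      (Yv n ⟨(v:ℕ), by omega⟩ - Yv n ⟨(u:ℕ), by omega⟩)) ≠ 0 := by
  rw [Finset.prod_ne_zero_iff]
  intro u hu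
  have hne : (⟨(v:ℕ), by omega⟩ : Fin n) ≠ ⟨(u:ℕ), by omega⟩ := by
    intro h
    have hval : (v:ℕ) = (u:ℕ) := by simpa using Fin.ext_iff.1 h
    exact (Finset.mem_erase.1 hu).1 (Fin.ext hval.symm)
  exact Yv_sub_ne_zero n hne

lemma hz_args (n i : ℕ) (hi : i < n) (m : ℤ) :
    hz (2*(i+1)) ((m.natAbs : ℤ) - (i+1)) (args n i hi)
      = ∑ v : Fin (i+1),
          (Xv n ⟨(v:ℕ), by omega⟩ ^ ((m.natAbs : ℕ) : ℤ)
            - Xv n ⟨(v:ℕ), by omega⟩ ^ (-((m.natAbs : ℕ) : ℤ))) /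
          ((Xv n ⟨(v:ℕ), by omega⟩ - (Xv n ⟨(v:ℕ), by omega⟩)⁻¹) *
            ∏ u ∈ Finset.univ.erase v,
              (Yv n ⟨(v:ℕ), by omega⟩ - Yv n ⟨(u:ℕ), by omega⟩)) := by
  have h1 := dd' (2*(i+1)) (by omega) (args n i hi) (args_ne n i hi) (m.natAbs + i)
  rw [show ((m.natAbs + i : ℕ) : ℤ) - ((2*(i+1) - 1 : ℕ) : ℤ)
      = (m.natAbs : ℤ) - (i+1) from by push_cast; omega] at h1
  have h2 := sum_pairSet (i+1) Finset.univ (fun r =>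
    args n i hi r ^ (m.natAbs + i) / ∏ s ∈ Finset.univ.erase r,
      (args n i hi r - args n i hi s))
  rw [pairSet_univ] at h2
  rw [← h1, h2]
  refine Finset.sum_congr rfl fun v _ => ?_
  rw [args_even n i hi v, args_odd n i hi v, den_even n i hi v, den_odd n i hi v]
  have hX : Xv n (⟨(v:ℕ), by omega⟩ : Fin n) ≠ 0 := Xv_ne_zero n _
  exact pair_div_add _ _ hX (Xv_sub_inv_ne_zero n _) (PP_ne_zero n i hi v) m.natAbs i

def Emat (n : ℕ) (i r : Fin n) : RF n :=
  if (r:ℕ) ≤ (i:ℕ) then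
    ((Xv n r - (Xv n r)⁻¹) *
      ∏ u ∈ (Finset.univ.filter (fun u : Fin n => (u:ℕ) ≤ (i:ℕ))).erase r,
        (Yv n r - Yv n u))⁻¹
  else 0

def Aent (n l : ℕ) (r j : Fin n) : RF n :=
  Xv n r ^ ((((j : ℕ) : ℤ) + 1) - l - n - 1) * (1 + Xv n r) ^ (j : ℕ) *
      (1 + wv n * Xv n r) ^ (n - 1 - (j : ℕ)) -
    Xv n r ^ (-(((j : ℕ) : ℤ) + 1) + l + n + 1) * (1 + (Xv n r)⁻¹) ^ (j : ℕ) *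
      (1 + wv n * (Xv n r)⁻¹) ^ (n - 1 - (j : ℕ))

lemma cent_eq (n l : ℕ) (i j : Fin n) :
    cent n l i j = ∑ r : Fin n, Emat n i r * Aent n l r j := by
  have hi : (i:ℕ) < n := i.2
  -- the denominator attached to v
  set D : Fin ((i:ℕ)+1) → RF n := fun v =>
    (Xv n ⟨(v:ℕ), by omega⟩ - (Xv n ⟨(v:ℕ), by omega⟩)⁻¹) *
      ∏ u ∈ Finset.univ.erase v,
        (Yv n ⟨(v:ℕ), by omega⟩ - Yv n ⟨(u:ℕ), by omega⟩) with hD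
  -- right-hand side as a sum over Fin (i+1)
  have hrhs : ∑ r : Fin n, Emat n i r * Aent n l r j
      = ∑ v : Fin ((i:ℕ)+1), (D v)⁻¹ * Aent n l ⟨(v:ℕ), by omega⟩ j := by
    calc ∑ r : Fin n, Emat n i r * Aent n l r j
        = ∑ r : Fin n, (if (r:ℕ) ≤ (i:ℕ) then
            ((Xv n r - (Xv n r)⁻¹) *
              ∏ u ∈ (Finset.univ.filter (fun u : Fin n => (u:ℕ) ≤ (i:ℕ))).erase r,
                (Yv n r - Yv n u))⁻¹ * Aent n l r j else 0) := by
          refine Finset.sum_congr rfl fun r _ => ?_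
          rw [Emat, ite_mul, zero_mul]
      _ = ∑ r ∈ Finset.univ.filter (fun r : Fin n => (r:ℕ) ≤ (i:ℕ)),
            ((Xv n r - (Xv n r)⁻¹) *
              ∏ u ∈ (Finset.univ.filter (fun u : Fin n => (u:ℕ) ≤ (i:ℕ))).erase r,
                (Yv n r - Yv n u))⁻¹ * Aent n l r j := by
          rw [Finset.sum_filter]
      _ = ∑ v : Fin ((i:ℕ)+1), (D v)⁻¹ * Aent n l ⟨(v:ℕ), by omega⟩ j := by
          rw [← sum_fin_cast n (i:ℕ) hi (fun r =>
            ((Xv n r - (Xv n r)⁻¹) *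
              ∏ u ∈ (Finset.univ.filter (fun u : Fin n => (u:ℕ) ≤ (i:ℕ))).erase r,
                (Yv n r - Yv n u))⁻¹ * Aent n l r j)]
          refine Finset.sum_congr rfl fun v _ => ?_
          rw [hD, ← prod_fin_cast_erase n (i:ℕ) hi v
            (fun r => Yv n ⟨(v:ℕ), by omega⟩ - Yv n r)]
  rw [hrhs]
  -- left-hand side
  rw [cent]
  have hstep : ∀ p ∈ Finset.range ((j:ℕ)+1), ∀ q ∈ Finset.range (n - (j:ℕ)),
      ((Int.sign ((p : ℤ) - q - l - 1) : ℤ) : RF n) * wv n ^ (n - 1 - (j : ℕ) - q) *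
        (Nat.choose (j : ℕ) p : RF n) * (Nat.choose (n - 1 - (j : ℕ)) q : RF n) *
        hz (2 * ((i : ℕ) + 1))
          (((((p : ℤ) - q - l - 1).natAbs : ℤ) - ((i : ℕ) + 1)))
          (args n (i : ℕ) i.2)
      = ∑ v : Fin ((i:ℕ)+1), (D v)⁻¹ *
          (wv n ^ (n - 1 - (j:ℕ) - q) * ((j:ℕ).choose p : RF n) *
            ((n - 1 - (j:ℕ)).choose q : RF n) *
            (Xv n ⟨(v:ℕ), by omega⟩ ^ (((p:ℤ) - q - l - 1))
              - Xv n ⟨(v:ℕ), by omega⟩ ^ (-((p:ℤ) - q - l - 1)))) := by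
    intro p _ q _
    set m : ℤ := (p : ℤ) - q - l - 1 with hm
    rw [hz_args n (i:ℕ) hi m, Finset.mul_sum]
    refine Finset.sum_congr rfl fun v _ => ?_
    rw [← sign_mul_zpow (Xv n ⟨(v:ℕ), by omega⟩) (Xv_ne_zero n _) m]
    rw [hD]
    rw [div_eq_mul_inv]
    ring
  rw [Finset.sum_congr rfl (fun p hp => Finset.sum_congr rfl (fun q hq => hstep p hp q hq))]
  rw [Finset.sum_congr rfl (fun p _ => Finset.sum_comm), Finset.sum_comm]
  refine Finset.sum_congr rfl fun v _ => ?_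
  simp only [Aent]
  rw [entryA n l ⟨(v:ℕ), by omega⟩ j, Finset.mul_sum]
  refine Finset.sum_congr rfl fun p _ => ?_
  rw [Finset.mul_sum]

lemma prod_Ioi_swap {M : Type*} [CommMonoid M] (n : ℕ) (f : Fin n → Fin n → M) :
    ∏ i : Fin n, ∏ j ∈ Finset.Ioi i, f i j
      = ∏ j : Fin n, ∏ i ∈ Finset.Iio j, f i j := by
  rw [Finset.prod_sigma', Finset.prod_sigma']
  refine Finset.prod_nbij' (fun x => ⟨x.2, x.1⟩) (fun x => ⟨x.2, x.1⟩) ?_ ?_ ?_ ?_ ?_ <;>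
    intro a ha
  · simp only [Finset.mem_sigma, Finset.mem_univ, true_and, Finset.mem_Ioi,
      Finset.mem_Iio] at ha ⊢
    exact ha
  · simp only [Finset.mem_sigma, Finset.mem_univ, true_and, Finset.mem_Ioi,
      Finset.mem_Iio] at ha ⊢
    exact ha
  · rfl
  · rfl
  · rfl

lemma filter_erase_eq_Iio (n : ℕ) (i : Fin n) :
    (Finset.univ.filter (fun u : Fin n => (u:ℕ) ≤ (i:ℕ))).erase i = Finset.Iio i := by
  ext u
  simp only [Finset.mem_erase, Finset.mem_filter, Finset.mem_univ, true_and,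
    Finset.mem_Iio, ne_eq, Fin.ext_iff, Fin.lt_def]
  omega

/-- First proof of Theorem 3.2, odd case: rewriting the determinant via complete
homogeneous symmetric functions. -/
theorem stmt_9 (n l : ℕ) (hn : 1 ≤ n) :
    (Matrix.of fun i j : Fin n =>
        Xv n i ^ ((((j : ℕ) : ℤ) + 1) - l - n - 1) * (1 + Xv n i) ^ (j : ℕ) *
            (1 + wv n * Xv n i) ^ (n - 1 - (j : ℕ)) -
          Xv n i ^ (-(((j : ℕ) : ℤ) + 1) + l + n + 1) * (1 + (Xv n i)⁻¹) ^ (j : ℕ) *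
            (1 + wv n * (Xv n i)⁻¹) ^ (n - 1 - (j : ℕ))).det =
    (∏ i : Fin n, ∏ j ∈ Finset.Ioi i,
        (Xv n j + (Xv n j)⁻¹ - Xv n i - (Xv n i)⁻¹)) *
      (∏ i : Fin n, (Xv n i - (Xv n i)⁻¹)) *
      (Matrix.of fun i j : Fin n => cent n l i j).det := by
  set A : Matrix (Fin n) (Fin n) (RF n) := Matrix.of (fun i j => Aent n l i j) with hA
  have hAeq : (Matrix.of fun i j : Fin n =>
      Xv n i ^ ((((j : ℕ) : ℤ) + 1) - l - n - 1) * (1 + Xv n i) ^ (j : ℕ) *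
          (1 + wv n * Xv n i) ^ (n - 1 - (j : ℕ)) -
        Xv n i ^ (-(((j : ℕ) : ℤ) + 1) + l + n + 1) * (1 + (Xv n i)⁻¹) ^ (j : ℕ) *
          (1 + wv n * (Xv n i)⁻¹) ^ (n - 1 - (j : ℕ))) = A := rfl
  rw [hAeq]
  set Em : Matrix (Fin n) (Fin n) (RF n) := Matrix.of (fun i r => Emat n i r) with hEm
  have hC : (Matrix.of fun i j : Fin n => cent n l i j) = Em * A := by
    ext i j
    rw [Matrix.mul_apply]
    exact cent_eq n l i j
  rw [hC, Matrix.det_mul]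
  have hTri : Em.BlockTriangular OrderDual.toDual := by
    intro i r h
    have : (i : ℕ) < (r : ℕ) := h
    show Emat n i r = 0
    rw [Emat, if_neg (by omega)]
  rw [Matrix.det_of_lowerTriangular Em hTri]
  have hdiag : ∀ i : Fin n, Em i i
      = ((Xv n i - (Xv n i)⁻¹) * ∏ u ∈ Finset.Iio i, (Yv n i - Yv n u))⁻¹ := by
    intro i
    show Emat n i i = _
    rw [Emat, if_pos le_rfl, filter_erase_eq_Iio]
  rw [Finset.prod_congr rfl (fun i _ => hdiag i)]
  have hP1 : (∏ i : Fin n, ∏ j ∈ Finset.Ioi i,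
      (Xv n j + (Xv n j)⁻¹ - Xv n i - (Xv n i)⁻¹))
      = ∏ i : Fin n, ∏ u ∈ Finset.Iio i, (Yv n i - Yv n u) := by
    rw [prod_Ioi_swap]
    refine Finset.prod_congr rfl fun i _ => Finset.prod_congr rfl fun u _ => ?_
    rw [Yv, Yv]
    ring
  rw [hP1]
  have hne1 : (∏ i : Fin n, (Xv n i - (Xv n i)⁻¹)) ≠ 0 := by
    rw [Finset.prod_ne_zero_iff]
    exact fun i _ => Xv_sub_inv_ne_zero n i
  have hne2 : (∏ i : Fin n, ∏ u ∈ Finset.Iio i, (Yv n i - Yv n u)) ≠ 0 := by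
    rw [Finset.prod_ne_zero_iff]
    intro i _
    rw [Finset.prod_ne_zero_iff]
    intro u hu
    exact Yv_sub_ne_zero n (ne_of_lt (Finset.mem_Iio.1 hu)).symm
  rw [Finset.prod_inv_distrib, Finset.prod_mul_distrib, ← mul_assoc,
    mul_comm (∏ i : Fin n, ∏ u ∈ Finset.Iio i, (Yv n i - Yv n u))
      (∏ i : Fin n, (Xv n i - (Xv n i)⁻¹)),
    mul_inv_cancel₀ (mul_ne_zero hne1 hne2), one_mul]
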